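/- Let Ω ⊆ ℂⁿ be open, let φ : Ω → ℝ be of class C², let ε > 0, and let f ∈ C_c^∞(Ω). Then ∫_Ω ( |∇φ|² − (1+ε) Δφ ) |f|² e^{−φ} dλ ≤ (2 + ε + 1/ε) Σ_{l=1}^{2n} ∫_Ω |∂_l f|² e^{−φ} dλ. -/

import Mathlib

open MeasureTheory Complex Metric Filter
noncomputable section

/-- `ℂⁿ` with its Euclidean inner product and norm. -/
abbrev Cn (n : ℕ) := EuclideanSpace ℂ (Fin n)

instance {n : ℕ} : MeasurableSpace (Cn n) := MeasurableSpace.comap (WithLp.ofLp (p := 2)) MeasurableSpace.pi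

/-- Lebesgue measure on `ℂⁿ ≅ ℝ^{2n}`. -/
instance {n : ℕ} : MeasureSpace (Cn n) := ⟨MeasureTheory.Measure.map (WithLp.toLp 2) (MeasureTheory.Measure.pi fun _ => volume)⟩

/-- The real coordinate direction indexed by `(j, b)`: the `x_j`-direction if `b = false`,
the `y_j`-direction if `b = true`. -/
def dir {n : ℕ} (l : Fin n × Bool) : Cn n :=
  EuclideanSpace.single l.1 (if l.2 then Complex.I else 1)

/-- The real partial derivative `∂_l`, `l` ranging over the `2n` real coordinate
directions of `ℂⁿ`. -/
def pd {n : ℕ} {F : Type} [NormedAddCommGroup F] [NormedSpace ℝ F]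
    (l : Fin n × Bool) (f : Cn n → F) (z : Cn n) : F :=
  fderiv ℝ f z (dir l)

/-- The real Laplacian `Δφ = Σ_l ∂_l ∂_l φ`. -/
def lap {n : ℕ} (φ : Cn n → ℝ) (z : Cn n) : ℝ :=
  ∑ l : Fin n × Bool, pd l (pd l φ) z

/-- `|∇φ|²`, the squared norm of the real gradient. -/
def gradSq {n : ℕ} (φ : Cn n → ℝ) (z : Cn n) : ℝ :=
  ∑ l : Fin n × Bool, (pd l φ z)^2

/-- The Levi form `L_u(z;t) = ¼(D²u(z)(t,t) + D²u(z)(it,it))`. -/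
def levi {n : ℕ} (u : Cn n → ℝ) (z t : Cn n) : ℝ :=
  (1/4) * (fderiv ℝ (fun w => fderiv ℝ u w t) z t
    + fderiv ℝ (fun w => fderiv ℝ u w (Complex.I • t)) z (Complex.I • t))

/-- The Wirtinger derivative `∂g/∂z_j = ½(∂g/∂x_j − i ∂g/∂y_j)` of a complex-valued function. -/
def wz {n : ℕ} (j : Fin n) (g : Cn n → ℂ) (z : Cn n) : ℂ :=
  (1/2) * (pd (j, false) g z - Complex.I * pd (j, true) g z)

/-- The Wirtinger derivative `∂g/∂z̄_j = ½(∂g/∂x_j + i ∂g/∂y_j)` of a complex-valued function. -/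
def wzbar {n : ℕ} (j : Fin n) (g : Cn n → ℂ) (z : Cn n) : ℂ :=
  (1/2) * (pd (j, false) g z + Complex.I * pd (j, true) g z)

/-- The Wirtinger derivative `∂φ/∂z_j` of a real-valued function. -/
def wzR {n : ℕ} (j : Fin n) (φ : Cn n → ℝ) (z : Cn n) : ℂ :=
  (1/2) * (Complex.ofReal (pd (j, false) φ z) - Complex.I * Complex.ofReal (pd (j, true) φ z))

/-- The Wirtinger derivative `∂φ/∂z̄_j` of a real-valued function. -/
def wzbarR {n : ℕ} (j : Fin n) (φ : Cn n → ℝ) (z : Cn n) : ℂ :=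
  (1/2) * (Complex.ofReal (pd (j, false) φ z) + Complex.I * Complex.ofReal (pd (j, true) φ z))

/-- The complex Hessian coefficient `∂²φ/∂z_j∂z̄_k`. -/
def hess {n : ℕ} (φ : Cn n → ℝ) (j k : Fin n) (z : Cn n) : ℂ :=
  wz j (fun w => wzbarR k φ w) z

/-- `∂̄*_φ f = −Σ_j (∂f_j/∂z_j − (∂φ/∂z_j) f_j)` for a `(0,1)`-form `f = (f_1,…,f_n)`. -/
def dbarStar {n : ℕ} (φ : Cn n → ℝ) (f : Fin n → Cn n → ℂ) (z : Cn n) : ℂ :=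
  -∑ j, (wz j (f j) z - wzR j φ z * f j z)

/-- `f ∈ C_c^∞(Ω)`: smooth, compactly supported, with support inside `Ω`. -/
def SmoothCompSupp {n : ℕ} (Ω : Set (Cn n)) (f : Cn n → ℂ) : Prop :=
  ContDiff ℝ (⊤ : ℕ∞) f ∧ HasCompactSupport f ∧ tsupport f ⊆ Ω

section AuxLemmas

variable {n : ℕ}

instance {n : ℕ} : BorelSpace (Cn n) := inferInstanceAs (BorelSpace (PiLp 2 fun _ : Fin n => ℂ))

instance {n : ℕ} : (volume : Measure (Cn n)).IsAddHaarMeasure :=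
  (PiLp.continuousLinearEquiv 2 ℝ (fun _ : Fin n => ℂ)).symm.isAddHaarMeasure_map
    (Measure.pi fun _ => volume)

theorem key_ibp {g : Cn n → ℝ} (v : Cn n) (hg : ContDiff ℝ 1 g) (hc : HasCompactSupport g) :
    ∫ z, fderiv ℝ g z v = 0 := by
  have hcont : Continuous fun z => fderiv ℝ g z v :=
    (hg.fderiv_right (m := 0) (le_refl _)).continuous.clm_apply continuous_const
  have hsupp : HasCompactSupport fun z => fderiv ℝ g z v :=
    (hc.fderiv ℝ).comp_left (g := fun L : Cn n →L[ℝ] ℝ => L v) rfl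
  have hint : Integrable (fun z => fderiv ℝ g z v) (volume : Measure (Cn n)) :=
    hcont.integrable_of_hasCompactSupport hsupp
  have hgint : Integrable g (volume : Measure (Cn n)) :=
    (hg.continuous).integrable_of_hasCompactSupport hc
  have h1 : Differentiable ℝ (fun _ : Cn n => (1:ℝ)) := differentiable_const _
  have := integral_mul_fderiv_eq_neg_fderiv_mul_of_integrable (μ := (volume : Measure (Cn n)))
    (f := fun _ => (1:ℝ)) (g := g) (v := v) (by simpa using (integrable_zero _ _ _))
    (by simpa using hint) (by simpa using hgint) (fun x _ => h1 x) (fun x _ => hg.differentiable one_ne_zero x)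
  simpa using this

theorem glob_contDiff {Ω K : Set (Cn n)} (hΩ : IsOpen Ω) (hKcl : IsClosed K) (hKΩ : K ⊆ Ω)
    {m : ℕ∞} {g : Cn n → ℝ} (hg : ContDiffOn ℝ m g Ω) (h0 : ∀ z ∉ K, g z = 0) :
    ContDiff ℝ m g := by
  apply contDiff_iff_contDiffAt.2
  intro x
  by_cases hx : x ∈ Ω
  · exact hg.contDiffAt (hΩ.mem_nhds hx)
  · have hmem : Kᶜ ∈ nhds x := hKcl.isOpen_compl.mem_nhds fun h => hx (hKΩ h)
    have heq : g =ᶠ[nhds x] fun _ => (0:ℝ) := by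
      filter_upwards [hmem] with y hy using h0 y hy
    exact (contDiffAt_const (c := (0:ℝ))).congr_of_eventuallyEq heq

theorem vanish_fderiv {K : Set (Cn n)} {F : Type*} [NormedAddCommGroup F] [NormedSpace ℝ F]
    (hKcl : IsClosed K) {g : Cn n → F} (h0 : ∀ z ∉ K, g z = 0) {z : Cn n} (hz : z ∉ K) :
    fderiv ℝ g z = 0 := by
  have hmem : Kᶜ ∈ nhds z := hKcl.isOpen_compl.mem_nhds hz
  have heq : g =ᶠ[nhds z] fun _ => (0:F) := by
    filter_upwards [hmem] with y hy using h0 y hy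
  rw [heq.fderiv_eq]
  exact fderiv_const_apply 0

theorem ibp_corollary {Ω K : Set (Cn n)} (hΩ : IsOpen Ω) (hK : IsCompact K) (hKΩ : K ⊆ Ω)
    {g : Cn n → ℝ} (hg : ContDiffOn ℝ 1 g Ω) (h0 : ∀ z ∉ K, g z = 0) (l : Fin n × Bool) :
    ∫ z in Ω, pd l g z = 0 := by
  have hgc : ContDiff ℝ 1 g := glob_contDiff hΩ hK.isClosed hKΩ hg h0
  have hcs : HasCompactSupport g := HasCompactSupport.intro hK h0
  have hvan : ∀ z, z ∉ Ω → pd l g z = 0 := by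
    intro z hz
    have : fderiv ℝ g z = 0 := vanish_fderiv hK.isClosed h0 fun hzK => hz (hKΩ hzK)
    simp [pd, this]
  rw [MeasureTheory.setIntegral_eq_integral_of_forall_compl_eq_zero hvan]
  exact key_ibp (dir l) hgc hcs

theorem int_aux {Ω K : Set (Cn n)} (hΩ : IsOpen Ω) (hK : IsCompact K) (hKΩ : K ⊆ Ω)
    {g : Cn n → ℝ} (hg : ContinuousOn g Ω) (h0 : ∀ z ∉ K, g z = 0) :
    MeasureTheory.IntegrableOn g Ω := by
  have hc : ContDiff ℝ (0:ℕ∞) g :=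
    glob_contDiff hΩ hK.isClosed hKΩ (contDiffOn_zero.mpr hg) h0
  exact (hc.continuous.integrable_of_hasCompactSupport
    (HasCompactSupport.intro hK h0)).integrableOn

theorem pd_mul {l : Fin n × Bool} {p q : Cn n → ℝ} {z : Cn n}
    (hp : DifferentiableAt ℝ p z) (hq : DifferentiableAt ℝ q z) :
    pd l (fun y => p y * q y) z = pd l p z * q z + p z * pd l q z := by
  unfold pd
  rw [(hp.hasFDerivAt.fun_mul hq.hasFDerivAt).fderiv]
  simp
  ring

theorem pd_add {l : Fin n × Bool} {p q : Cn n → ℝ} {z : Cn n}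
    (hp : DifferentiableAt ℝ p z) (hq : DifferentiableAt ℝ q z) :
    pd l (fun y => p y + q y) z = pd l p z + pd l q z := by
  unfold pd
  rw [fderiv_fun_add hp hq]
  simp

theorem pd_re {l : Fin n × Bool} {f : Cn n → ℂ} {z : Cn n} (hf : DifferentiableAt ℝ f z) :
    pd l (fun y => (f y).re) z = (pd l f z).re := by
  unfold pd
  rw [show (fun y => (f y).re) = (⇑Complex.reCLM ∘ f) from rfl,
    (Complex.reCLM.hasFDerivAt.comp z hf.hasFDerivAt).fderiv]
  simp

theorem pd_im {l : Fin n × Bool} {f : Cn n → ℂ} {z : Cn n} (hf : DifferentiableAt ℝ f z) :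
    pd l (fun y => (f y).im) z = (pd l f z).im := by
  unfold pd
  rw [show (fun y => (f y).im) = (⇑Complex.imCLM ∘ f) from rfl,
    (Complex.imCLM.hasFDerivAt.comp z hf.hasFDerivAt).fderiv]
  simp

theorem pd_exp_neg {l : Fin n × Bool} {φ : Cn n → ℝ} {z : Cn n}
    (h : DifferentiableAt ℝ φ z) :
    pd l (fun y => Real.exp (-φ y)) z = -(pd l φ z) * Real.exp (-φ z) := by
  have h1 : HasFDerivAt (fun y => -φ y) (-(fderiv ℝ φ z)) z := h.hasFDerivAt.neg
  have h2 := (Real.hasDerivAt_exp (-φ z)).comp_hasFDerivAt z h1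
  unfold pd
  rw [show (fun y => Real.exp (-φ y)) = (Real.exp ∘ fun y => -φ y) from rfl, h2.fderiv]
  simp
  ring

end AuxLemmas
/-- `∫ (|∇φ|² − (1+ε)Δφ)|f|² e^{−φ} ≤ (2+ε+1/ε) Σ_l ∫ |∂_l f|² e^{−φ}`. -/
theorem stmt4 {n : ℕ} (Ω : Set (Cn n)) (hΩ : IsOpen Ω)
    (φ : Cn n → ℝ) (hφ : ContDiffOn ℝ 2 φ Ω)
    (ε : ℝ) (hε : 0 < ε)
    (f : Cn n → ℂ) (hf : SmoothCompSupp Ω f) :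
    (∫ z in Ω, (gradSq φ z - (1 + ε) * lap φ z) * ‖f z‖^2 * Real.exp (-φ z))
      ≤ (2 + ε + 1/ε) * ∑ l : Fin n × Bool,
          ∫ z in Ω, ‖pd l f z‖^2 * Real.exp (-φ z) := by
  obtain ⟨hfs, hfc, hfK⟩ := hf
  set K := tsupport f with hKdef
  have hK : IsCompact K := hfc
  have hKΩ : K ⊆ Ω := hfK
  set G : Cn n → ℝ := fun z => (f z).re * (f z).re + (f z).im * (f z).im with hG_def
  -- differentiability of f and its parts
  have hfd : ∀ z, DifferentiableAt ℝ f z := fun z => (hfs.differentiable (by simp)) z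
  have hud : ∀ z, DifferentiableAt ℝ (fun y => (f y).re) z := fun z =>
    (Complex.reCLM.differentiable.comp (hfs.differentiable (by simp))) z
  have hwd : ∀ z, DifferentiableAt ℝ (fun y => (f y).im) z := fun z =>
    (Complex.imCLM.differentiable.comp (hfs.differentiable (by simp))) z
  have hGsm : ContDiff ℝ (⊤ : ℕ∞) G := by
    rw [hG_def]
    have hu : ContDiff ℝ (⊤ : ℕ∞) (fun z => (f z).re) := Complex.reCLM.contDiff.comp hfs
    have hw : ContDiff ℝ (⊤ : ℕ∞) (fun z => (f z).im) := Complex.imCLM.contDiff.comp hfs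
    exact (hu.mul hu).add (hw.mul hw)
  have hGd : ∀ z, DifferentiableAt ℝ G z := fun z => (hGsm.differentiable (by simp)) z
  have hpdGz : ∀ (l : Fin n × Bool) (z : Cn n), pd l G z
      = (pd l f z).re * (f z).re + (f z).re * (pd l f z).re
        + ((pd l f z).im * (f z).im + (f z).im * (pd l f z).im) := by
    intro l z
    rw [hG_def]
    rw [pd_add ((hud z).fun_mul (hud z)) ((hwd z).fun_mul (hwd z)),
      pd_mul (hud z) (hud z), pd_mul (hwd z) (hwd z), pd_re (hfd z), pd_im (hfd z)]
  -- regularity of φ-pieces on Ω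
  have hφdiff : ∀ z ∈ Ω, DifferentiableAt ℝ φ z := fun z hz =>
    (hφ.contDiffAt (hΩ.mem_nhds hz)).differentiableAt (by norm_num)
  have ha : ∀ l : Fin n × Bool, ContDiffOn ℝ 1 (pd l φ) Ω := by
    intro l
    show ContDiffOn ℝ 1 (fun z => fderiv ℝ φ z (dir l)) Ω
    exact (hφ.fderiv_of_isOpen hΩ (by norm_num)).clm_apply contDiffOn_const
  have had : ∀ (l : Fin n × Bool) (z : Cn n), z ∈ Ω → DifferentiableAt ℝ (pd l φ) z :=
    fun l z hz => ((ha l).contDiffAt (hΩ.mem_nhds hz)).differentiableAt one_ne_zero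
  have haco : ∀ l : Fin n × Bool, ContinuousOn (pd l φ) Ω := fun l => (ha l).continuousOn
  have hbco : ∀ l : Fin n × Bool, ContinuousOn (fun z => pd l (pd l φ) z) Ω := by
    intro l
    show ContinuousOn (fun z => fderiv ℝ (pd l φ) z (dir l)) Ω
    exact ((ha l).continuousOn_fderiv_of_isOpen hΩ le_rfl).clm_apply continuousOn_const
  have hE : ContDiffOn ℝ 1 (fun z => Real.exp (-φ z)) Ω :=
    Real.contDiff_exp.comp_contDiffOn (hφ.of_le (by norm_num)).neg
  have hEd : ∀ z ∈ Ω, DifferentiableAt ℝ (fun y => Real.exp (-φ y)) z :=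
    fun z hz => (hE.contDiffAt (hΩ.mem_nhds hz)).differentiableAt one_ne_zero
  have hEco : ContinuousOn (fun z => Real.exp (-φ z)) Ω := hE.continuousOn
  have hpdfco : ∀ l : Fin n × Bool, Continuous (fun z => pd l f z) := by
    intro l
    show Continuous (fun z => fderiv ℝ f z (dir l))
    exact ((hfs.fderiv_right (m := 0) (by exact_mod_cast le_top)).continuous).clm_apply continuous_const
  have hpdGco : ∀ l : Fin n × Bool, Continuous (fun z => pd l G z) := by
    intro l
    show Continuous (fun z => fderiv ℝ G z (dir l))
    exact ((hGsm.fderiv_right (m := 0) (by exact_mod_cast le_top)).continuous).clm_apply continuous_const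
  -- vanishing off K
  have hf0 : ∀ z, z ∉ K → f z = 0 := fun z hz => image_eq_zero_of_notMem_tsupport hz
  have hG0 : ∀ z, z ∉ K → G z = 0 := by
    intro z hz; rw [hG_def]; simp [hf0 z hz]
  have hpdf0 : ∀ (l : Fin n × Bool) (z : Cn n), z ∉ K → pd l f z = 0 := by
    intro l z hz
    show fderiv ℝ f z (dir l) = 0
    rw [vanish_fderiv hK.isClosed hf0 hz]
    rfl
  have hpdG0 : ∀ (l : Fin n × Bool) (z : Cn n), z ∉ K → pd l G z = 0 := by
    intro l z hz
    show fderiv ℝ G z (dir l) = 0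
    rw [vanish_fderiv hK.isClosed hG0 hz]
    rfl
  -- integrability
  have hIntB : ∀ l : Fin n × Bool,
      MeasureTheory.IntegrableOn (fun z => (pd l φ z)^2 * (G z * Real.exp (-φ z))) Ω :=
    fun l => int_aux hΩ hK hKΩ
      (((haco l).pow 2).mul ((hGsm.continuous.continuousOn).mul hEco))
      (fun z hz => by rw [hG0 z hz]; ring)
  have hIntA : ∀ l : Fin n × Bool,
      MeasureTheory.IntegrableOn (fun z => pd l (pd l φ) z * (G z * Real.exp (-φ z))) Ω :=
    fun l => int_aux hΩ hK hKΩ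
      ((hbco l).mul ((hGsm.continuous.continuousOn).mul hEco))
      (fun z hz => by rw [hG0 z hz]; ring)
  have hIntC : ∀ l : Fin n × Bool,
      MeasureTheory.IntegrableOn (fun z => pd l φ z * (pd l G z * Real.exp (-φ z))) Ω :=
    fun l => int_aux hΩ hK hKΩ
      ((haco l).mul (((hpdGco l).continuousOn).mul hEco))
      (fun z hz => by rw [hpdG0 l z hz]; ring)
  have hIntR : ∀ l : Fin n × Bool,
      MeasureTheory.IntegrableOn (fun z => ‖pd l f z‖^2 * Real.exp (-φ z)) Ω :=
    fun l => int_aux hΩ hK hKΩ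
      ((((hpdfco l).norm.pow 2).continuousOn).mul hEco)
      (fun z hz => by rw [hpdf0 l z hz]; simp)
  -- integration by parts identity
  have hIBP : ∀ l : Fin n × Bool,
      (∫ z in Ω, pd l (pd l φ) z * (G z * Real.exp (-φ z)))
        = (∫ z in Ω, (pd l φ z)^2 * (G z * Real.exp (-φ z)))
          - ∫ z in Ω, pd l φ z * (pd l G z * Real.exp (-φ z)) := by
    intro l
    have hgC1 : ContDiffOn ℝ 1 (fun z => pd l φ z * (G z * Real.exp (-φ z))) Ω :=
      (ha l).mul (((hGsm.of_le (by exact_mod_cast le_top)).contDiffOn).mul hE)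
    have hg0 : ∀ z, z ∉ K → pd l φ z * (G z * Real.exp (-φ z)) = 0 :=
      fun z hz => by rw [hG0 z hz]; ring
    have hzero := ibp_corollary hΩ hK hKΩ hgC1 hg0 l
    have hpt : ∀ z ∈ Ω, pd l (fun y => pd l φ y * (G y * Real.exp (-φ y))) z
        = pd l (pd l φ) z * (G z * Real.exp (-φ z))
          + pd l φ z * (pd l G z * Real.exp (-φ z))
          - (pd l φ z)^2 * (G z * Real.exp (-φ z)) := by
      intro z hz
      rw [pd_mul (had l z hz) ((hGd z).fun_mul (hEd z hz)), pd_mul (hGd z) (hEd z hz),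
        pd_exp_neg (hφdiff z hz)]
      ring
    have hsplit : ∫ z in Ω, (pd l (pd l φ) z * (G z * Real.exp (-φ z))
          + pd l φ z * (pd l G z * Real.exp (-φ z))
          - (pd l φ z)^2 * (G z * Real.exp (-φ z))) = 0 := by
      rw [← MeasureTheory.setIntegral_congr_fun hΩ.measurableSet hpt]
      exact hzero
    have h1 : MeasureTheory.IntegrableOn (fun z => pd l (pd l φ) z * (G z * Real.exp (-φ z))
        + pd l φ z * (pd l G z * Real.exp (-φ z))) Ω := (hIntA l).add (hIntC l)
    rw [MeasureTheory.integral_sub h1 (hIntB l),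
      MeasureTheory.integral_add (hIntA l) (hIntC l)] at hsplit
    linarith
  -- rewrite the LHS as a sum
  have hLHS : (∫ z in Ω, (gradSq φ z - (1 + ε) * lap φ z) * ‖f z‖^2 * Real.exp (-φ z))
      = ∑ l : Fin n × Bool, ((∫ z in Ω, (pd l φ z)^2 * (G z * Real.exp (-φ z)))
          - (1+ε) * ∫ z in Ω, pd l (pd l φ) z * (G z * Real.exp (-φ z))) := by
    rw [MeasureTheory.setIntegral_congr_fun hΩ.measurableSet
        (g := fun z => ∑ l : Fin n × Bool, ((pd l φ z)^2 * (G z * Real.exp (-φ z))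
          - (1+ε) * (pd l (pd l φ) z * (G z * Real.exp (-φ z)))))]
    · rw [MeasureTheory.integral_finset_sum]
      · exact Finset.sum_congr rfl fun l _ => by
          rw [MeasureTheory.integral_sub (hIntB l) ((hIntA l).const_mul (1+ε)),
            MeasureTheory.integral_const_mul]
      · exact fun l _ => (hIntB l).sub ((hIntA l).const_mul (1+ε))
    · intro z hz
      dsimp only
      have hnf : ‖f z‖^2 = G z := by
        rw [hG_def]
        simp [Complex.sq_norm, Complex.normSq_apply]
      rw [hnf]
      unfold gradSq lap
      rw [Finset.sum_sub_distrib, ← Finset.sum_mul, ← Finset.mul_sum, ← Finset.sum_mul]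
      ring
  -- per-direction estimate
  have hstep : ∀ l : Fin n × Bool,
      (∫ z in Ω, (pd l φ z)^2 * (G z * Real.exp (-φ z)))
        - (1+ε) * (∫ z in Ω, pd l (pd l φ) z * (G z * Real.exp (-φ z)))
      ≤ (2 + ε + 1/ε) * ∫ z in Ω, ‖pd l f z‖^2 * Real.exp (-φ z) := by
    intro l
    rw [hIBP l]
    have hptineq : ∀ z ∈ Ω,
        (1+ε) * (pd l φ z * (pd l G z * Real.exp (-φ z)))
          - ε * ((pd l φ z)^2 * (G z * Real.exp (-φ z)))
        ≤ (2 + ε + 1/ε) * (‖pd l f z‖^2 * Real.exp (-φ z)) := by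
      intro z _
      have hEp : (0:ℝ) < Real.exp (-φ z) := Real.exp_pos _
      have hGz : G z = (f z).re * (f z).re + (f z).im * (f z).im := by rw [hG_def]
      have hnf : ‖pd l f z‖^2 = (pd l f z).re^2 + (pd l f z).im^2 := by
        simp [Complex.sq_norm, Complex.normSq_apply]
        ring
      rw [hGz, hpdGz l z, hnf]
      set A := pd l φ z with hA
      set U := (f z).re with hU
      set W := (f z).im with hW
      set U' := (pd l f z).re with hU'
      set W' := (pd l f z).im with hW'
      have hC : 2 + ε + 1/ε = (1+ε)^2/ε := by field_simp; ring
      rw [hC]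
      have core : (1+ε) * (A * (U'*U + U*U' + (W'*W + W*W'))) - ε * (A^2*(U*U+W*W))
          ≤ (1+ε)^2/ε * (U'^2 + W'^2) := by
        rw [div_mul_eq_mul_div, le_div_iff₀ hε]
        nlinarith [sq_nonneg (ε*A*U - (1+ε)*U'), sq_nonneg (ε*A*W - (1+ε)*W'), hε.le]
      nlinarith [mul_le_mul_of_nonneg_right core hEp.le]
    have hmono := MeasureTheory.setIntegral_mono_on
      (((hIntC l).const_mul (1+ε)).sub ((hIntB l).const_mul ε))
      ((hIntR l).const_mul (2+ε+1/ε)) hΩ.measurableSet hptineq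
    simp only [Pi.sub_apply] at hmono
    rw [MeasureTheory.integral_sub ((hIntC l).const_mul (1+ε)) ((hIntB l).const_mul ε),
      MeasureTheory.integral_const_mul, MeasureTheory.integral_const_mul,
      MeasureTheory.integral_const_mul] at hmono
    linarith
  rw [hLHS, Finset.mul_sum]
  exact Finset.sum_le_sum fun l _ => hstep l
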